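/- Let A and B be associative unital ℂ-algebras, let M be a simple A-module and N a simple B-module, and assume both M and N have countable dimension over ℂ. Then the tensor product M ⊗_ℂ N, with the natural action of A ⊗_ℂ B given by (a ⊗ b)•(m ⊗ n) = (a•m) ⊗ (b•n), is a simple A ⊗_ℂ B-module. -/

import Mathlib

open scoped Cardinal TensorProduct
open Polynomial

section LinIndep

/-- Noncommutative version of `Transcendental.linearIndependent_sub_inv`. -/
theorem linearIndependent_sub_inverse {D : Type*} [Ring D] [Algebra ℂ D] {f : D}
    (hT : Transcendental ℂ f) (hu : ∀ c : ℂ, IsUnit (f - algebraMap ℂ D c)) :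
    LinearIndependent ℂ fun a : ℂ => Ring.inverse (f - algebraMap ℂ D a) := by
  classical
  rw [transcendental_iff] at hT
  refine linearIndependent_iff'.2 fun s m hm i hi => ?_
  have h1 : ∀ i ∈ s, (Polynomial.aeval f (∏ j ∈ s, (X - C j))) *
      Ring.inverse (f - algebraMap ℂ D i)
      = Polynomial.aeval f (∏ j ∈ s.erase i, (X - C j)) := by
    intro i hi
    rw [← Finset.prod_erase_mul _ _ hi, map_mul]
    have hXC : Polynomial.aeval f (X - C i) = f - algebraMap ℂ D i := by
      simp [Polynomial.aeval_C]
    rw [hXC, mul_assoc, Ring.mul_inverse_cancel _ (hu i), mul_one]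
  have hm2 := congrArg (fun t => (Polynomial.aeval f (∏ j ∈ s, (X - C j))) * t) hm
  simp only [mul_zero, Finset.mul_sum, mul_smul_comm] at hm2
  rw [Finset.sum_congr rfl (fun j hj => by rw [h1 j hj])] at hm2
  set p : ℂ[X] := ∑ i ∈ s, Polynomial.C (m i) * ∏ j ∈ s.erase i, (X - C j) with hpdef
  have haep : Polynomial.aeval f p = 0 := by
    rw [hpdef, map_sum]
    rw [← hm2]
    refine Finset.sum_congr rfl fun j hj => ?_
    rw [map_mul, Polynomial.aeval_C, ← Algebra.smul_def]
  have hp0 : p = 0 := hT p haep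
  have := congrArg (fun q => Polynomial.aeval i q) hp0
  simp only [hpdef, map_sum, map_mul, map_prod, map_sub, Polynomial.aeval_X,
    Polynomial.aeval_C, Algebra.algebraMap_self_apply, map_zero] at this
  rw [← Finset.sum_erase_add _ _ hi] at this
  have h2 : ∀ j ∈ s.erase i, m j * ((s.erase j).prod fun x => i - x) = 0 := fun j hj => by
    have hmem : i ∈ s.erase j :=
      Finset.mem_erase_of_ne_of_mem (Finset.ne_of_mem_erase hj).symm hi
    rw [← Finset.prod_erase_mul _ _ hmem, sub_self, mul_zero, mul_zero]
  rw [Finset.sum_eq_zero h2, zero_add] at this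
  exact eq_zero_of_ne_zero_of_mul_right_eq_zero (Finset.prod_ne_zero_iff.2 fun j hj =>
    sub_ne_zero.2 (Finset.ne_of_mem_erase hj).symm) this

end LinIndep

section Dixmier

variable {A M : Type*} [Ring A] [Algebra ℂ A]
  [AddCommGroup M] [Module ℂ M] [Module A M] [IsScalarTower ℂ A M]

theorem smulCommClass_complex_aux : SMulCommClass ℂ A M := by
  constructor
  intro c a m
  have key : ∀ x : M, c • x = (algebraMap ℂ A c) • x := fun x => by
    rw [Algebra.algebraMap_eq_smul_one, smul_assoc, one_smul]
  rw [key (a • m), key m, ← mul_smul, ← mul_smul, Algebra.commutes]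

/-- Dixmier's countable-dimension Schur lemma. -/
theorem endo_eq_smul_id [SMulCommClass ℂ A M] [IsSimpleModule A M]
    (hM : Module.rank ℂ M ≤ ℵ₀) (f : Module.End A M) :
    ∃ c : ℂ, f = algebraMap ℂ (Module.End A M) c := by
  classical
  have := IsSimpleModule.nontrivial A M
  obtain ⟨m₀, hm₀⟩ := exists_ne (0 : M)
  have hunit : ∀ g : Module.End A M, g ≠ 0 → IsUnit g := fun g hg =>
    (Module.End.isUnit_iff g).mpr (LinearMap.bijective_of_ne_zero hg)
  by_cases hT : Transcendental ℂ f
  · exfalso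
    have hu : ∀ c : ℂ, IsUnit (f - algebraMap ℂ (Module.End A M) c) := by
      intro c
      apply hunit
      intro h
      exact Polynomial.X_sub_C_ne_zero c
        (transcendental_iff.mp hT (X - C c) (by simpa [Polynomial.aeval_C] using h))
    have li := linearIndependent_sub_inverse hT hu
    let ev : Module.End A M →ₗ[ℂ] M :=
      { toFun := fun g => g m₀
        map_add' := fun g h => rfl
        map_smul' := fun c g => rfl }
    have hev : ∀ g : Module.End A M, ev g = 0 → g = 0 := by
      intro g hg
      by_contra hne
      exact hm₀ (((Module.End.isUnit_iff _).mp (hunit _ hne)).injective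
        (by simpa [ev] using hg))
    have hkev : LinearMap.ker ev = ⊥ := by
      rw [LinearMap.ker_eq_bot']
      intro g hg
      exact hev g hg
    have li2 := li.map' ev hkev
    have hcard := li2.cardinal_lift_le_rank
    rw [Cardinal.mk_complex] at hcard
    have h3 : (𝔠 : Cardinal) ≤ ℵ₀ := by
      have h2 := hcard.trans (Cardinal.lift_le.mpr hM)
      rw [Cardinal.lift_aleph0, Cardinal.lift_continuum] at h2
      exact h2
    exact absurd h3 (not_le.mpr Cardinal.aleph0_lt_continuum)
  · -- algebraic case
    rw [Transcendental, not_not] at hT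
    have hint : IsIntegral ℂ f := hT.isIntegral
    have hnt : Nontrivial (Module.End A M) := by
      refine ⟨1, 0, fun h => hm₀ ?_⟩
      have := LinearMap.congr_fun h m₀
      simpa using this
    set p := minpoly ℂ f with hp
    have hp0 : p ≠ 0 := minpoly.ne_zero hint
    obtain ⟨lam, hroot⟩ := Complex.exists_root (minpoly.degree_pos hint)
    have hdvd : (X - C lam) ∣ p := dvd_iff_isRoot.mpr hroot
    obtain ⟨q, hq⟩ := hdvd
    refine ⟨lam, ?_⟩
    by_contra hne
    have hfsub : f - algebraMap ℂ _ lam ≠ 0 := sub_ne_zero.mpr hne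
    have haev : Polynomial.aeval f p = 0 := minpoly.aeval ℂ f
    rw [hq, map_mul] at haev
    have hXsub : Polynomial.aeval f (X - C lam) = f - algebraMap ℂ _ lam := by
      simp [Polynomial.aeval_C]
    rw [hXsub] at haev
    have hq0 : Polynomial.aeval f q = 0 :=
      ((hunit _ hfsub).mul_right_eq_zero).mp haev
    have hqne : q ≠ 0 := fun h => hp0 (by rw [hq, h, mul_zero])
    have hle := minpoly.degree_le_of_ne_zero ℂ f hqne hq0
    rw [← hp] at hle
    have hnd : p.natDegree = 1 + q.natDegree := by
      rw [hq, Polynomial.natDegree_mul (Polynomial.X_sub_C_ne_zero lam) hqne,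
        Polynomial.natDegree_X_sub_C]
    have h2 : p.natDegree ≤ q.natDegree := Polynomial.natDegree_le_natDegree hle
    omega

end Dixmier


section Density

variable {A M : Type*} [Ring A] [Algebra ℂ A]
  [AddCommGroup M] [Module ℂ M] [Module A M] [IsScalarTower ℂ A M]


/-- Jacobson-density-style annihilator lemma. -/
theorem exists_annihilating [SMulCommClass ℂ A M] [IsSimpleModule A M]
    (hM : Module.rank ℂ M ≤ ℵ₀) (s : Finset M) :
    ∀ m : M, m ∉ Submodule.span ℂ (s : Set M) →
      ∃ a : A, (∀ w ∈ Submodule.span ℂ (s : Set M), a • w = 0) ∧ a • m ≠ 0 := by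
  classical
  induction s using Finset.induction_on with
  | empty =>
    intro m hm
    refine ⟨1, ?_, ?_⟩
    · intro w hw
      simp only [Finset.coe_empty, Submodule.span_empty, Submodule.mem_bot] at hw
      rw [hw, smul_zero]
    · simpa using fun h => hm (by simp [h])
  | @insert v s' hvs IH =>
    intro m hm
    rw [Finset.coe_insert] at hm
    by_cases hv : v ∈ Submodule.span ℂ (s' : Set M)
    · rw [Submodule.span_insert_eq_span hv] at hm
      obtain ⟨a, ha1, ha2⟩ := IH m hm
      refine ⟨a, ?_, ha2⟩
      rw [Finset.coe_insert, Submodule.span_insert_eq_span hv]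
      exact ha1
    · -- v ∉ span s'
      set W := Submodule.span ℂ (s' : Set M) with hW
      -- the set of a • v for a annihilating W is an A-submodule
      set Ann : A → Prop := fun a => ∀ w ∈ W, a • w = 0 with hAnn
      have hAnnAdd : ∀ {a b}, Ann a → Ann b → Ann (a + b) := fun ha hb w hw => by
        rw [add_smul, ha w hw, hb w hw, add_zero]
      have hAnnMul : ∀ (r : A) {a}, Ann a → Ann (r * a) := fun r {a} ha w hw => by
        rw [mul_smul, ha w hw, smul_zero]
      set Msub : Submodule A M :=
        { carrier := {x | ∃ a, Ann a ∧ a • v = x}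
          add_mem' := by
            rintro x y ⟨a, ha, rfl⟩ ⟨b, hb, rfl⟩
            exact ⟨a + b, hAnnAdd ha hb, by rw [add_smul]⟩
          zero_mem' := ⟨0, fun w hw => by rw [zero_smul], zero_smul A v⟩
          smul_mem' := by
            rintro r x ⟨a, ha, rfl⟩
            exact ⟨r * a, hAnnMul r ha, by rw [mul_smul]⟩ } with hMsub
      obtain ⟨a₀, ha₀, ha₀v⟩ := IH v hv
      have hne : Msub ≠ ⊥ := by
        intro h
        apply ha₀v
        have : a₀ • v ∈ Msub := ⟨a₀, ha₀, rfl⟩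
        rwa [h, Submodule.mem_bot] at this
      have htop : Msub = ⊤ := (eq_bot_or_eq_top Msub).resolve_left hne
      have surj : ∀ x : M, ∃ a, Ann a ∧ a • v = x := fun x => by
        have : x ∈ Msub := htop ▸ Submodule.mem_top
        exact this
      by_cases hcase : ∃ a, Ann a ∧ a • v = 0 ∧ a • m ≠ 0
      · obtain ⟨a, ha, hav, ham⟩ := hcase
        refine ⟨a, ?_, ham⟩
        intro w hw
        rw [Finset.coe_insert] at hw
        obtain ⟨c, z, hz, rfl⟩ := Submodule.mem_span_insert.mp hw
        rw [smul_add, smul_comm a c v, hav, smul_zero, ha z hz, add_zero]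
      · push_neg at hcase
        exfalso
        -- well-definedness
        have wd : ∀ a b, Ann a → Ann b → a • v = b • v → a • m = b • m := by
          intro a b ha hb hab
          have h1 : Ann (a - b) := fun w hw => by
            rw [sub_smul, ha w hw, hb w hw, sub_zero]
          have h2 : (a - b) • v = 0 := by rw [sub_smul, hab, sub_self]
          have := hcase (a - b) h1 h2
          rwa [sub_smul, sub_eq_zero] at this
        set fn : M → M := fun x => (surj x).choose • m with hfn
        have hadd : ∀ x y, fn (x + y) = fn x + fn y := by
              intro x y
              obtain ⟨hax, havx⟩ := (surj x).choose_spec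
              obtain ⟨hay, havy⟩ := (surj y).choose_spec
              obtain ⟨haxy, havxy⟩ := (surj (x + y)).choose_spec
              have := wd _ ((surj x).choose + (surj y).choose) haxy (hAnnAdd hax hay)
                (by rw [add_smul, havx, havy, havxy])
              rw [hfn]
              dsimp only
              rw [this, add_smul]
        have hsm : ∀ (r : A) (x : M), fn (r • x) = r • fn x := by
              intro r x
              obtain ⟨hax, havx⟩ := (surj x).choose_spec
              obtain ⟨harx, havrx⟩ := (surj (r • x)).choose_spec
              have := wd _ (r * (surj x).choose) harx (hAnnMul r hax)
                (by rw [mul_smul, havx, havrx])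
              rw [hfn]
              dsimp only
              rw [this]
              simp [mul_smul]
        set F : Module.End A M :=
          { toFun := fn
            map_add' := hadd
            map_smul' := hsm } with hF
        obtain ⟨c, hc⟩ := endo_eq_smul_id hM F
        have hFapp : ∀ x : M, F x = c • x := by
          intro x
          rw [hc]
          simp [Module.algebraMap_end_apply]
        have key : ∀ a, Ann a → a • (m - c • v) = 0 := by
          intro a ha
          obtain ⟨hax, havx⟩ := (surj (a • v)).choose_spec
          have h1 : F (a • v) = a • m := wd _ a hax ha havx
          have h2 : F (a • v) = c • (a • v) := hFapp _
          rw [smul_sub, ← h1, h2, smul_comm c a v, sub_self]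
        have hmem : m - c • v ∈ W := by
          by_contra hnm
          obtain ⟨a, ha, ham⟩ := IH (m - c • v) hnm
          exact ham (key a ha)
        apply hm
        rw [Submodule.mem_span_insert]
        exact ⟨c, m - c • v, hmem, by abel⟩

end Density


/-- Let `A` and `B` be associative unital `ℂ`-algebras, `M` a simple
`A`-module and `N` a simple `B`-module, both of countable dimension over `ℂ`.  Then
`M ⊗[ℂ] N`, with the natural `A ⊗[ℂ] B`-action determined by
`(a ⊗ b) • (m ⊗ n) = (a • m) ⊗ (b • n)`, is a simple `A ⊗[ℂ] B`-module. -/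
theorem tensorProduct_simple_of_simple_countable_dim
    {A B M N : Type*} [Ring A] [Algebra ℂ A] [Ring B] [Algebra ℂ B]
    [AddCommGroup M] [Module ℂ M] [Module A M] [IsScalarTower ℂ A M]
    [AddCommGroup N] [Module ℂ N] [Module B N] [IsScalarTower ℂ B N]
    [IsSimpleModule A M] [IsSimpleModule B N]
    (hM : Module.rank ℂ M ≤ ℵ₀) (hN : Module.rank ℂ N ≤ ℵ₀)
    [Module (A ⊗[ℂ] B) (M ⊗[ℂ] N)]
    (hsmul : ∀ (a : A) (b : B) (m : M) (n : N),
      (a ⊗ₜ[ℂ] b) • (m ⊗ₜ[ℂ] n) = (a • m) ⊗ₜ[ℂ] (b • n)) :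
    IsSimpleModule (A ⊗[ℂ] B) (M ⊗[ℂ] N) := by
  classical
  letI : SMulCommClass ℂ A M := smulCommClass_complex_aux
  letI : SMulCommClass ℂ B N := smulCommClass_complex_aux
  have ntM := IsSimpleModule.nontrivial A M
  have ntN := IsSimpleModule.nontrivial B N
  set bM := Module.Basis.ofVectorSpace ℂ M with hbM
  -- nontriviality of the tensor product
  haveI ntMN : Nontrivial (M ⊗[ℂ] N) := by
    set bN := Module.Basis.ofVectorSpace ℂ N with hbN
    have := bM.index_nonempty
    have := bN.index_nonempty
    obtain ⟨i⟩ := bM.index_nonempty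
    obtain ⟨j⟩ := bN.index_nonempty
    exact ⟨(Module.Basis.tensorProduct bM bN) (i, j), 0, (Module.Basis.tensorProduct bM bN).ne_zero (i, j)⟩
  -- every element is a sum `∑ i in s, bM i ⊗ₜ n i`
  have rep : ∀ t : M ⊗[ℂ] N, ∃ (s : Finset _) (n : _ → N),
      t = ∑ i ∈ s, bM i ⊗ₜ[ℂ] n i := by
    intro t
    induction t using TensorProduct.induction_on with
    | zero => exact ⟨∅, fun _ => 0, by simp⟩
    | tmul m n0 =>
      refine ⟨(bM.repr m).support, fun i => (bM.repr m i) • n0, ?_⟩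
      have hm : m = ∑ i ∈ (bM.repr m).support, (bM.repr m i) • bM i := by
        conv_lhs => rw [← bM.linearCombination_repr m]
        rw [Finsupp.linearCombination_apply, Finsupp.sum]
      conv_lhs => rw [hm]
      rw [TensorProduct.sum_tmul]
      exact Finset.sum_congr rfl fun i _ => TensorProduct.smul_tmul _ _ _
    | add t1 t2 h1 h2 =>
      obtain ⟨s1, n1, rfl⟩ := h1
      obtain ⟨s2, n2, rfl⟩ := h2
      refine ⟨s1 ∪ s2,
        fun i => (if i ∈ s1 then n1 i else 0) + (if i ∈ s2 then n2 i else 0), Eq.symm ?_⟩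
      have key : ∀ (s' : Finset _) (n' : _ → N), s' ⊆ s1 ∪ s2 →
          (∑ i ∈ s1 ∪ s2, bM i ⊗ₜ[ℂ] (if i ∈ s' then n' i else 0))
            = ∑ i ∈ s', bM i ⊗ₜ[ℂ] n' i := by
        intro s' n' hsub
        rw [Finset.sum_congr rfl
          (fun i _ => by rw [apply_ite (fun z => bM i ⊗ₜ[ℂ] z), TensorProduct.tmul_zero]),
          Finset.sum_ite_mem, Finset.inter_eq_right.mpr hsub]
      calc ∑ i ∈ s1 ∪ s2, bM i ⊗ₜ[ℂ]
            ((if i ∈ s1 then n1 i else 0) + (if i ∈ s2 then n2 i else 0))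
          = (∑ i ∈ s1 ∪ s2, bM i ⊗ₜ[ℂ] (if i ∈ s1 then n1 i else 0))
            + ∑ i ∈ s1 ∪ s2, bM i ⊗ₜ[ℂ] (if i ∈ s2 then n2 i else 0) := by
            rw [← Finset.sum_add_distrib]
            exact Finset.sum_congr rfl fun i _ => by rw [TensorProduct.tmul_add]
        _ = (∑ i ∈ s1, bM i ⊗ₜ[ℂ] n1 i) + ∑ i ∈ s2, bM i ⊗ₜ[ℂ] n2 i := by
            rw [key s1 n1 Finset.subset_union_left, key s2 n2 Finset.subset_union_right]
        _ = (∑ i ∈ s1, bM i ⊗ₜ[ℂ] n1 i) + ∑ i ∈ s2, bM i ⊗ₜ[ℂ] n2 i := rfl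
  -- the simple order structure
  rw [isSimpleModule_iff]
  constructor
  intro P
  rcases eq_or_ne P ⊥ with h | h
  · exact Or.inl h
  right
  obtain ⟨t, htP, ht0⟩ := Submodule.exists_mem_ne_zero_of_ne_bot h
  obtain ⟨s, n, rfl⟩ := rep t
  set s' : Finset _ := s.filter (fun i => n i ≠ 0) with hs'
  have hts' : ∑ i ∈ s, bM i ⊗ₜ[ℂ] n i = ∑ i ∈ s', bM i ⊗ₜ[ℂ] n i := by
    rw [hs', Finset.sum_filter_of_ne]
    intro i _ hne hni
    exact hne (by rw [hni, TensorProduct.tmul_zero])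
  have hs'ne : s'.Nonempty := by
    rcases Finset.eq_empty_or_nonempty s' with he | hne
    · exfalso; apply ht0; rw [hts', he, Finset.sum_empty]
    · exact hne
  obtain ⟨i₀, hi₀⟩ := hs'ne
  -- annihilate the other basis vectors
  set sF : Finset M := (s'.erase i₀).image bM with hsF
  have hnotmem : bM i₀ ∉ Submodule.span ℂ (sF : Set M) := by
    rw [hsF, Finset.coe_image]
    exact bM.linearIndependent.notMem_span_image (Finset.notMem_erase i₀ s')
  obtain ⟨a, ha, ham⟩ := exists_annihilating (A := A) hM sF (bM i₀) hnotmem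
  have hu : (a ⊗ₜ[ℂ] (1 : B)) • (∑ i ∈ s, bM i ⊗ₜ[ℂ] n i)
      = (a • bM i₀) ⊗ₜ[ℂ] n i₀ := by
    rw [hts', Finset.smul_sum,
      Finset.sum_congr rfl (fun i _ => by rw [hsmul, one_smul])]
    refine Finset.sum_eq_single_of_mem i₀ hi₀ fun j hj hne => ?_
    have hj' : bM j ∈ Submodule.span ℂ (sF : Set M) := by
      apply Submodule.subset_span
      rw [hsF, Finset.coe_image]
      exact Set.mem_image_of_mem bM (Finset.mem_erase.mpr ⟨hne, hj⟩)
    rw [ha (bM j) hj', TensorProduct.zero_tmul]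
  have huP : (a • bM i₀) ⊗ₜ[ℂ] n i₀ ∈ P := hu ▸ P.smul_mem _ htP
  have hn₀ : n i₀ ≠ 0 := (Finset.mem_filter.mp hi₀).2
  -- every pure tensor is in P
  have pure : ∀ (m : M) (nn : N), m ⊗ₜ[ℂ] nn ∈ P := by
    intro m nn
    have h1 : ∃ a' : A, a' • (a • bM i₀) = m := by
      have := IsSimpleModule.span_singleton_eq_top A (M := M) ham
      exact Submodule.mem_span_singleton.mp (this ▸ Submodule.mem_top)
    obtain ⟨a', ha'⟩ := h1
    have step1 : m ⊗ₜ[ℂ] n i₀ ∈ P := by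
      have := P.smul_mem (a' ⊗ₜ[ℂ] (1 : B)) huP
      rwa [hsmul, ha', one_smul] at this
    have h2 : ∃ b' : B, b' • n i₀ = nn := by
      have := IsSimpleModule.span_singleton_eq_top B (M := N) hn₀
      exact Submodule.mem_span_singleton.mp (this ▸ Submodule.mem_top)
    obtain ⟨b', hb'⟩ := h2
    have := P.smul_mem ((1 : A) ⊗ₜ[ℂ] b') step1
    rwa [hsmul, hb', one_smul] at this
  rw [Submodule.eq_top_iff']
  intro x
  induction x using TensorProduct.induction_on with
  | zero => exact P.zero_mem
  | tmul m nn => exact pure m nn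
  | add x y hx hy => exact P.add_mem hx hy
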